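/- Let $Y$ be an $n \times (n+1)$ matrix of indeterminates and $S \subseteq [n]$ nonempty. The generating set consisting of the linear forms $f_j = \sum_{i \in S} Y_{ji}$ ($1 \leq j \leq n$) and all maximal minors $\det Y(j)$ ($0 \leq j \leq n$) is a Gr\"obner basis of the ideal they generate, with respect to the lexicographic-type term order in which $Y_{10} \prec Y_{11} \prec \cdots \prec Y_{1n} \prec Y_{20} \prec \cdots \prec Y_{nn}$ (rows completed left to right, with the first column entry smallest in each row), assuming without loss of generality that the columns indexed by $S$ occur consecutively starting at column $1$. -/

import Mathlib

set_option maxHeartbeats 1000000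


open MvPolynomial

noncomputable section Stmt7

/-- The variable index set for the `n × (n+1)` matrix `Y = (Y_{ij})`, ordered
so that the most significant variable (for the lexicographic monomial order,
which looks at the smallest index first) is `Y_{nn}` and the least significant
is `Y_{10}`: rows are completed left to right, the first-column entry being
smallest within each row. -/
abbrev Stmt7.Idx (n : ℕ) := (Lex (Fin n × Fin (n + 1)))ᵒᵈ

instance (n : ℕ) : WellFoundedGT (Stmt7.Idx n) := Finite.to_wellFoundedGT

/-- The lexicographic monomial order realizing the term order
`Y_{10} ≺ Y_{11} ≺ ⋯ ≺ Y_{1n} ≺ Y_{20} ≺ ⋯ ≺ Y_{nn}`. -/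
def Stmt7.ord (n : ℕ) : MonomialOrder (Stmt7.Idx n) := MonomialOrder.lex

/-- The leading exponent (multidegree of the leading monomial) of a nonzero
polynomial with respect to a monomial order (junk value `0` for `f = 0`). -/
def Stmt7.leadExp {σ : Type*} (m : MonomialOrder σ) {K : Type*} [Field K]
    (f : MvPolynomial σ K) : σ →₀ ℕ :=
  if h : f.support.Nonempty then
    m.toSyn.symm ((f.support.image m.toSyn).max' (h.image _))
  else 0

/-- A set `G` is a Gröbner basis of the ideal it generates iff the leading
monomial of every nonzero element of the ideal is divisible by the leading
monomial of some element of `G`. -/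
def Stmt7.IsGroebnerBasis {σ : Type*} (m : MonomialOrder σ) {K : Type*}
    [Field K] (G : Set (MvPolynomial σ K)) : Prop :=
  ∀ f ∈ Ideal.span G, f ≠ 0 →
    ∃ g ∈ G, g ≠ 0 ∧ Stmt7.leadExp m g ≤ Stmt7.leadExp m f

namespace Stmt7Aux

open Finsupp Stmt7

variable {σ K : Type*} [Field K]

theorem supp_ne (m : MonomialOrder σ) {f : MvPolynomial σ K} (hf : f ≠ 0) :
    f.support.Nonempty :=
  MvPolynomial.support_nonempty.mpr hf

theorem toSyn_leadExp (m : MonomialOrder σ) {f : MvPolynomial σ K} (hf : f ≠ 0) :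
    m.toSyn (leadExp m f) = (f.support.image m.toSyn).max' ((supp_ne m hf).image _) := by
  rw [leadExp, dif_pos (supp_ne m hf), AddEquiv.apply_symm_apply]

theorem leadExp_mem (m : MonomialOrder σ) {f : MvPolynomial σ K} (hf : f ≠ 0) :
    leadExp m f ∈ f.support := by
  have h := Finset.max'_mem (f.support.image m.toSyn) ((supp_ne m hf).image _)
  rw [← toSyn_leadExp m hf] at h
  obtain ⟨a, ha, hae⟩ := Finset.mem_image.mp h
  rwa [← m.toSyn.injective hae]

theorem le_leadExp (m : MonomialOrder σ) {f : MvPolynomial σ K} (hf : f ≠ 0)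
    {ξ : σ →₀ ℕ} (hξ : ξ ∈ f.support) : m.toSyn ξ ≤ m.toSyn (leadExp m f) := by
  rw [toSyn_leadExp m hf]
  exact Finset.le_max' _ _ (Finset.mem_image_of_mem _ hξ)

theorem leadExp_eq (m : MonomialOrder σ) {f : MvPolynomial σ K} {μ : σ →₀ ℕ}
    (hμ : μ ∈ f.support) (h : ∀ ξ ∈ f.support, m.toSyn ξ ≤ m.toSyn μ) :
    leadExp m f = μ := by
  have hf : f ≠ 0 := fun h0 => by simp [h0] at hμ
  exact m.toSyn.injective (le_antisymm (h _ (leadExp_mem m hf)) (le_leadExp m hf hμ))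

theorem leadExp_mul (m : MonomialOrder σ) {f g : MvPolynomial σ K}
    (hf : f ≠ 0) (hg : g ≠ 0) :
    leadExp m (f * g) = leadExp m f + leadExp m g := by
  classical
  have hsupf : AddMonoidAlgebra.supDegree m.toSyn f ≤ m.toSyn (leadExp m f) :=
    Finset.sup_le fun ξ hξ => le_leadExp m hf hξ
  have hsupg : AddMonoidAlgebra.supDegree m.toSyn g ≤ m.toSyn (leadExp m g) :=
    Finset.sup_le fun ξ hξ => le_leadExp m hg hξ
  have hco : MvPolynomial.coeff (leadExp m f + leadExp m g) (f * g)
      = MvPolynomial.coeff (leadExp m f) f * MvPolynomial.coeff (leadExp m g) g :=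
    AddMonoidAlgebra.apply_add_of_supDegree_le (fun a b => map_add m.toSyn a b)
      m.toSyn.injective hsupf hsupg
  have hne : MvPolynomial.coeff (leadExp m f + leadExp m g) (f * g) ≠ 0 := by
    rw [hco]
    exact mul_ne_zero (MvPolynomial.mem_support_iff.mp (leadExp_mem m hf))
      (MvPolynomial.mem_support_iff.mp (leadExp_mem m hg))
  apply leadExp_eq m (MvPolynomial.mem_support_iff.mpr hne)
  intro ξ hξ
  obtain ⟨a, ha, b, hb, rfl⟩ := Finset.mem_add.mp (MvPolynomial.support_mul f g hξ)
  rw [map_add, map_add]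
  exact add_le_add (le_leadExp m hf ha) (le_leadExp m hg hb)

/-! ### Lex-specific setup -/

variable {n : ℕ}

/-- Shorthand for the variable indices. -/
abbrev ι (p : Fin n × Fin (n + 1)) : Stmt7.Idx n := OrderDual.toDual (toLex p)

theorem ord_toSyn (c : Stmt7.Idx n →₀ ℕ) : (Stmt7.ord n).toSyn c = toLex c := rfl

theorem ι_inj {p q : Fin n × Fin (n + 1)} (h : ι p = ι q) : p = q := h

theorem ι_le_ι {j : Fin n} {i i' : Fin (n + 1)} (h : i' ≤ i) :
    ι (j, i) ≤ ι (j, i') := by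
  rw [OrderDual.toDual_le_toDual]
  exact Prod.Lex.le_iff.mpr (Or.inr ⟨rfl, h⟩)

theorem single_le_single {v w : Stmt7.Idx n} (h : v ≤ w) :
    (Stmt7.ord n).toSyn (Finsupp.single w 1) ≤ (Stmt7.ord n).toSyn (Finsupp.single v 1) := by
  rcases eq_or_lt_of_le h with rfl | hlt
  · exact le_rfl
  rw [ord_toSyn, ord_toSyn]
  apply le_of_lt
  apply (Finsupp.Lex.lt_iff (a := toLex (Finsupp.single w 1)) (b := toLex (Finsupp.single v 1))).mpr
  refine ⟨v, fun j hj => ?_, ?_⟩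
  · have h1 : w ≠ j := ne_of_gt (hj.trans hlt)
    have h2 : v ≠ j := ne_of_gt hj
    show Finsupp.single w 1 j = Finsupp.single v 1 j
    rw [Finsupp.single_eq_of_ne' h1, Finsupp.single_eq_of_ne' h2]
  · show Finsupp.single w 1 v < Finsupp.single v 1 v
    rw [Finsupp.single_eq_of_ne' (ne_of_gt hlt), Finsupp.single_eq_same]
    exact Nat.zero_lt_one

variable (K)

/-- The columns used in the substitution. -/
def Ecol (n : ℕ) (k : Fin (n + 1)) : Finset (Fin (n + 1)) :=
  (Finset.Icc (1 : Fin (n + 1)) k).erase k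

/-- The column of a variable index. -/
def colOf (v : Stmt7.Idx n) : Fin (n + 1) := (ofLex (OrderDual.ofDual v)).2

/-- The row of a variable index. -/
def rowOf (v : Stmt7.Idx n) : Fin n := (ofLex (OrderDual.ofDual v)).1

/-- The substitution sending `Y_{j,k}` to `-(Y_{j,1} + ⋯ + Y_{j,k-1})`, fixing
all other variables. -/
def subst (n : ℕ) (k : Fin (n + 1)) : Stmt7.Idx n → MvPolynomial (Stmt7.Idx n) K :=
  fun v => if colOf v = k
    then -(∑ i ∈ Ecol n k, X (ι (rowOf v, i)))
    else X v

theorem subst_ne (k : Fin (n + 1)) {j : Fin n} {i : Fin (n + 1)} (h : i ≠ k) :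
    subst K n k (ι (j, i)) = X (ι (j, i)) := if_neg h

theorem subst_k (k : Fin (n + 1)) (j : Fin n) :
    subst K n k (ι (j, k)) = -(∑ i ∈ Ecol n k, X (ι (j, i))) := if_pos rfl

/-- The substitution algebra map. -/
def phi (n : ℕ) (k : Fin (n + 1)) :
    MvPolynomial (Stmt7.Idx n) K →ₐ[K] MvPolynomial (Stmt7.Idx n) K :=
  aeval (subst K n k)

theorem subst_support (k : Fin (n + 1)) (v : Stmt7.Idx n) :
    ∀ τ ∈ (subst K n k v).support,
      (∀ w, colOf w = k → τ w = 0) ∧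
        (Stmt7.ord n).toSyn τ ≤ (Stmt7.ord n).toSyn (Finsupp.single v 1) := by
  intro τ hτ
  by_cases h : colOf v = k
  · rw [subst, if_pos h, MvPolynomial.support_neg] at hτ
    classical
    obtain ⟨i, hi, hτi⟩ := Finset.mem_biUnion.mp (MvPolynomial.support_sum hτ)
    rw [MvPolynomial.support_X, Finset.mem_singleton] at hτi
    subst hτi
    have hik : i ≠ k := (Finset.mem_erase.mp hi).1
    constructor
    · intro w hw
      apply Finsupp.single_eq_of_ne'
      intro hwe
      rw [← hwe] at hw
      exact hik hw
    · have hvw : v ≤ ι (rowOf v, i) := by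
        have hle : i ≤ k := (Finset.mem_Icc.mp (Finset.mem_erase.mp hi).2).2
        have : ι ((rowOf v : Fin n), (k : Fin (n+1))) ≤ ι (rowOf v, i) := ι_le_ι hle
        rw [← h] at this
        exact this
      exact single_le_single hvw
  · rw [subst, if_neg h, MvPolynomial.support_X, Finset.mem_singleton] at hτ
    subst hτ
    refine ⟨fun w hw => ?_, le_rfl⟩
    apply Finsupp.single_eq_of_ne'
    intro hwe
    rw [← hwe] at hw
    exact h hw

theorem subst_pow_support (k : Fin (n + 1)) (v : Stmt7.Idx n) (e : ℕ) :
    ∀ τ ∈ ((subst K n k v) ^ e).support,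
      (∀ w, colOf w = k → τ w = 0) ∧
        (Stmt7.ord n).toSyn τ ≤ (Stmt7.ord n).toSyn (Finsupp.single v e) := by
  classical
  induction e with
  | zero =>
    intro τ hτ
    rw [pow_zero] at hτ
    rw [show (1 : MvPolynomial (Stmt7.Idx n) K) = MvPolynomial.monomial 0 1 by
        rw [MvPolynomial.monomial_zero', MvPolynomial.C_1]] at hτ
    rw [MvPolynomial.support_monomial, if_neg (one_ne_zero), Finset.mem_singleton] at hτ
    subst hτ
    simp
  | succ e ih =>
    intro τ hτ
    rw [pow_succ] at hτ
    obtain ⟨a, ha, b, hb, rfl⟩ := Finset.mem_add.mp (MvPolynomial.support_mul _ _ hτ)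
    obtain ⟨ha1, ha2⟩ := ih a ha
    obtain ⟨hb1, hb2⟩ := subst_support K k v b hb
    refine ⟨fun w hw => ?_, ?_⟩
    · rw [Finsupp.add_apply, ha1 w hw, hb1 w hw]
    · rw [map_add]
      have : Finsupp.single v (e + 1) = Finsupp.single v e + Finsupp.single v 1 := by
        rw [← Finsupp.single_add]
      rw [this, map_add]
      exact add_le_add ha2 hb2

theorem prod_support (k : Fin (n + 1)) {α : Type*} (s : Finset α)
    (g : α → MvPolynomial (Stmt7.Idx n) K) (w : α → (Stmt7.Idx n →₀ ℕ))
    (h : ∀ a ∈ s, ∀ τ ∈ (g a).support,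
      (∀ x, colOf x = k → τ x = 0) ∧
        (Stmt7.ord n).toSyn τ ≤ (Stmt7.ord n).toSyn (w a)) :
    ∀ ξ ∈ (∏ a ∈ s, g a).support,
      (∀ x, colOf x = k → ξ x = 0) ∧
        (Stmt7.ord n).toSyn ξ ≤ (Stmt7.ord n).toSyn (∑ a ∈ s, w a) := by
  classical
  induction s using Finset.cons_induction with
  | empty =>
    intro ξ hξ
    rw [Finset.prod_empty] at hξ
    rw [show (1 : MvPolynomial (Stmt7.Idx n) K) = MvPolynomial.monomial 0 1 by
        rw [MvPolynomial.monomial_zero', MvPolynomial.C_1]] at hξ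
    rw [MvPolynomial.support_monomial, if_neg (one_ne_zero), Finset.mem_singleton] at hξ
    subst hξ
    simp
  | cons a s ha ih =>
    intro ξ hξ
    rw [Finset.prod_cons] at hξ
    obtain ⟨x, hx, y, hy, rfl⟩ := Finset.mem_add.mp (MvPolynomial.support_mul _ _ hξ)
    obtain ⟨hx1, hx2⟩ := h a (Finset.mem_cons_self a s) x hx
    obtain ⟨hy1, hy2⟩ := ih (fun b hb => h b (Finset.mem_cons_of_mem hb)) y hy
    refine ⟨fun z hz => ?_, ?_⟩
    · rw [Finsupp.add_apply, hx1 z hz, hy1 z hz]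
    · rw [map_add, Finset.sum_cons, map_add]
      exact add_le_add hx2 hy2

theorem phi_monomial_support (k : Fin (n + 1)) (ν : Stmt7.Idx n →₀ ℕ) (c : K) :
    ∀ ξ ∈ (phi K n k (MvPolynomial.monomial ν c)).support,
      (∀ x, colOf x = k → ξ x = 0) ∧
        (Stmt7.ord n).toSyn ξ ≤ (Stmt7.ord n).toSyn ν := by
  intro ξ hξ
  rw [phi, MvPolynomial.aeval_monomial] at hξ
  have h0 : algebraMap K (MvPolynomial (Stmt7.Idx n) K) c
      * (ν.prod fun v e => subst K n k v ^ e)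
      = c • (ν.prod fun v e => subst K n k v ^ e) := by
    rw [MvPolynomial.smul_eq_C_mul, MvPolynomial.algebraMap_eq]
  rw [h0] at hξ
  have hξ' := MvPolynomial.support_smul hξ
  have hres := prod_support K k ν.support (fun v => subst K n k v ^ ν v)
    (fun v => Finsupp.single v (ν v))
    (fun v _ => subst_pow_support K k v (ν v)) ξ hξ'
  have hsum : (∑ v ∈ ν.support, Finsupp.single v (ν v)) = ν := Finsupp.sum_single ν
  rwa [hsum] at hres

theorem phi_monomial_kfree (k : Fin (n + 1)) (ν : Stmt7.Idx n →₀ ℕ) (c : K)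
    (h : ∀ x, colOf x = k → ν x = 0) :
    phi K n k (MvPolynomial.monomial ν c) = MvPolynomial.monomial ν c := by
  rw [phi, MvPolynomial.aeval_monomial, MvPolynomial.monomial_eq, MvPolynomial.algebraMap_eq]
  congr 1
  apply Finsupp.prod_congr
  intro v hv
  have hcol : colOf v ≠ k := by
    intro hc
    exact (Finsupp.mem_support_iff.mp hv) (h v hc)
  rw [subst, if_neg hcol]

theorem phi_lead (k : Fin (n + 1)) {f : MvPolynomial (Stmt7.Idx n) K} (hf : f ≠ 0)
    (hKF : ∀ x, colOf x = k → (leadExp (Stmt7.ord n) f) x = 0) :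
    phi K n k f ≠ 0 ∧
      leadExp (Stmt7.ord n) (phi K n k f) = leadExp (Stmt7.ord n) f := by
  classical
  set m := Stmt7.ord n with hm
  set μ := leadExp m f with hμ
  have h1 : phi K n k f = ∑ ν ∈ f.support,
      phi K n k (MvPolynomial.monomial ν (MvPolynomial.coeff ν f)) := by
    conv_lhs => rw [f.as_sum]
    rw [map_sum]
  have hcoeff : MvPolynomial.coeff μ (phi K n k f) = MvPolynomial.coeff μ f := by
    rw [h1, MvPolynomial.coeff_sum]
    rw [Finset.sum_eq_single μ]
    · rw [phi_monomial_kfree K k μ _ hKF, MvPolynomial.coeff_monomial, if_pos rfl]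
    · intro ν hν hne
      by_contra hc
      have hmem : μ ∈ (phi K n k (MvPolynomial.monomial ν (MvPolynomial.coeff ν f))).support :=
        MvPolynomial.mem_support_iff.mpr hc
      have h2 := (phi_monomial_support K k ν _ μ hmem).2
      have h3 := le_leadExp m hf hν
      refine hne ?_
      rw [hμ]
      exact m.toSyn.injective (le_antisymm h3 h2)
    · intro hni
      exact absurd (leadExp_mem m hf) hni
  have hμs : μ ∈ f.support := leadExp_mem m hf
  have hc0 : MvPolynomial.coeff μ f ≠ 0 := MvPolynomial.mem_support_iff.mp hμs
  have hφ0 : phi K n k f ≠ 0 := by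
    intro h0
    rw [h0, MvPolynomial.coeff_zero] at hcoeff
    exact hc0 hcoeff.symm
  refine ⟨hφ0, ?_⟩
  apply leadExp_eq m (MvPolynomial.mem_support_iff.mpr (hcoeff ▸ hc0))
  intro ξ hξ
  rw [h1] at hξ
  obtain ⟨ν, hν, hξν⟩ := Finset.mem_biUnion.mp (MvPolynomial.support_sum hξ)
  exact le_trans ((phi_monomial_support K k ν _ ξ hξν).2) (le_leadExp m hf hν)

/-! ### The matrices -/

/-- The j-th maximal minor matrix. -/
def Xmat (n : ℕ) (j : Fin (n + 1)) :
    Matrix (Fin n) (Fin n) (MvPolynomial (Stmt7.Idx n) K) :=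
  Matrix.of fun a b : Fin n => X (ι (a, j.succAbove b))

theorem det_updateColumn_finsum {R : Type*} [CommRing R] {m' : Type*} [DecidableEq m']
    [Fintype m'] (M : Matrix m' m' R) (b0 : m') {α : Type*} (s : Finset α)
    (w : α → m' → R) :
    (M.updateCol b0 (∑ i ∈ s, w i)).det = ∑ i ∈ s, (M.updateCol b0 (w i)).det := by
  classical
  induction s using Finset.cons_induction with
  | empty =>
    rw [Finset.sum_empty, Finset.sum_empty]
    apply Matrix.det_eq_zero_of_column_eq_zero b0
    intro i
    rw [Matrix.updateCol_self]
    rfl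
  | cons a s ha ih =>
    rw [Finset.sum_cons, Finset.sum_cons, Matrix.det_updateCol_add, ih]

theorem phi_minor (k : Fin (n + 1)) (j : Fin (n + 1)) :
    phi K n k ((Xmat K n j).det) ∈ Ideal.span {(Xmat K n k).det} := by
  classical
  have hdet : phi K n k ((Xmat K n j).det) = ((Xmat K n j).map (phi K n k)).det :=
    AlgHom.map_det _ _
  by_cases hjk : j = k
  · have hmap : (Xmat K n j).map (phi K n k) = Xmat K n j := by
      refine Matrix.ext fun a b => ?_
      rw [Matrix.map_apply]
      show phi K n k (X (ι (a, j.succAbove b))) = X (ι (a, j.succAbove b))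
      have hne : j.succAbove b ≠ k := by
        rw [← hjk]
        exact Fin.succAbove_ne j b
      rw [phi, MvPolynomial.aeval_X, subst_ne K k hne]
    rw [hdet, hmap, hjk]
    exact Ideal.mem_span_singleton_self _
  · obtain ⟨b0, hb0⟩ := Fin.exists_succAbove_eq (fun h : k = j => hjk h.symm)
    have hmap : (Xmat K n j).map (phi K n k)
        = (Xmat K n j).updateCol b0 (fun a => -(∑ i ∈ Ecol n k, X (ι (a, i)))) := by
      refine Matrix.ext fun a b => ?_
      rw [Matrix.map_apply]
      by_cases hb : b = b0
      · rw [hb, Matrix.updateCol_self]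
        show phi K n k (X (ι (a, j.succAbove b0))) = _
        rw [hb0, phi, MvPolynomial.aeval_X, subst_k]
      · rw [Matrix.updateCol_ne hb]
        show phi K n k (X (ι (a, j.succAbove b))) = X (ι (a, j.succAbove b))
        have hne : j.succAbove b ≠ k := by
          rw [← hb0]
          intro h
          exact hb (Fin.succAbove_right_inj.mp h)
        rw [phi, MvPolynomial.aeval_X, subst_ne K _ hne]
    have hfun : (fun a : Fin n => -(∑ i ∈ Ecol n k, (X (ι (a, i)) : MvPolynomial (Stmt7.Idx n) K)))
        = (-1 : MvPolynomial (Stmt7.Idx n) K)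
          • (∑ i ∈ Ecol n k, fun a : Fin n => (X (ι (a, i)) : MvPolynomial (Stmt7.Idx n) K)) := by
      funext a
      rw [Pi.smul_apply, Finset.sum_apply, neg_one_smul]
    rw [hdet, hmap, hfun, Matrix.det_updateCol_smul, det_updateColumn_finsum]
    apply Ideal.mul_mem_left
    apply Ideal.sum_mem
    intro i hi
    have hik : i ≠ k := (Finset.mem_erase.mp hi).1
    by_cases hij : i = j
    · -- the permuted minor
      subst hij
      set c : Fin n → Fin (n + 1) := Function.update (i.succAbove) b0 i with hc
      have hcb0 : c b0 = i := Function.update_self _ _ _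
      have hcne' : ∀ b, b ≠ b0 → c b = i.succAbove b := fun b hb =>
        Function.update_of_ne hb _ _
      have hcval : ∀ a b, ((Xmat K n i).updateCol b0
          (fun a : Fin n => (X (ι (a, i)) : MvPolynomial (Stmt7.Idx n) K))) a b
          = X (ι (a, c b)) := by
        intro a b
        by_cases hb : b = b0
        · rw [hb, Matrix.updateCol_self, hcb0]
        · rw [Matrix.updateCol_ne hb, hcne' b hb]
          rfl
      have hcne : ∀ b, c b ≠ k := by
        intro b
        by_cases hb : b = b0
        · rw [hb, hcb0]
          exact fun h => hjk h
        · rw [hcne' b hb, ← hb0]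
          exact fun h => hb (Fin.succAbove_right_inj.mp h)
      have hcinj : Function.Injective c := by
        intro x y hxy
        by_cases hx : x = b0 <;> by_cases hy : y = b0
        · rw [hx, hy]
        · rw [hx, hcb0, hcne' y hy] at hxy
          exact absurd hxy.symm (Fin.succAbove_ne i y)
        · rw [hy, hcb0, hcne' x hx] at hxy
          exact absurd hxy (Fin.succAbove_ne i x)
        · rw [hcne' x hx, hcne' y hy] at hxy
          exact Fin.succAbove_right_inj.mp hxy
      have hsome : ∀ b, ((finSuccEquiv' k) (c b)).isSome := by
        intro b
        rw [Option.isSome_iff_ne_none]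
        intro h
        have : (finSuccEquiv' k) (c b) = (finSuccEquiv' k) k := by
          rw [h, finSuccEquiv'_at]
        exact hcne b ((finSuccEquiv' k).injective this)
      set π0 : Fin n → Fin n := fun b => (((finSuccEquiv' k) (c b)).get (hsome b)) with hπ0
      have hπval : ∀ b, k.succAbove (π0 b) = c b := by
        intro b
        have h1 : (finSuccEquiv' k).symm (some (π0 b)) = k.succAbove (π0 b) :=
          finSuccEquiv'_symm_some k (π0 b)
        rw [hπ0] at h1
        rw [Option.some_get] at h1
        rw [Equiv.symm_apply_apply] at h1
        exact h1.symm
      have hπinj : Function.Injective π0 := by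
        intro x y hxy
        apply hcinj
        rw [← hπval x, ← hπval y, hxy]
      let π : Equiv.Perm (Fin n) :=
        Equiv.ofBijective π0 (Finite.injective_iff_bijective.mp hπinj)
      have hsub : ((Xmat K n i).updateCol b0
          (fun a : Fin n => (X (ι (a, i)) : MvPolynomial (Stmt7.Idx n) K)))
          = (Xmat K n k).submatrix id π := by
        refine Matrix.ext fun a b => ?_
        rw [Matrix.submatrix_apply, hcval]
        show X (ι (a, c b)) = X (ι (a, k.succAbove (π0 b)))
        rw [hπval]
      rw [hsub, Matrix.det_permute']
      exact Ideal.mul_mem_left _ _ (Ideal.mem_span_singleton_self _)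
    · -- duplicate column
      obtain ⟨b1, hb1⟩ := Fin.exists_succAbove_eq hij
      have hb1b0 : b1 ≠ b0 := by
        intro h
        rw [h, hb0] at hb1
        exact hik hb1.symm
      have hzero : ((Xmat K n j).updateCol b0
          (fun a : Fin n => (X (ι (a, i)) : MvPolynomial (Stmt7.Idx n) K))).det = 0 := by
        apply Matrix.det_zero_of_column_eq (Ne.symm hb1b0)
        intro a
        rw [Matrix.updateCol_self, Matrix.updateCol_ne hb1b0]
        show (X (ι (a, i)) : MvPolynomial (Stmt7.Idx n) K) = X (ι (a, j.succAbove b1))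
        rw [hb1]
      rw [hzero]
      exact Ideal.zero_mem _

theorem phi_lin (k : Fin (n + 1)) (hk1 : (1 : Fin (n + 1)) ≤ k) (j : Fin n) :
    phi K n k (∑ i ∈ Finset.Icc (1 : Fin (n + 1)) k, X (ι (j, i))) = 0 := by
  classical
  rw [map_sum]
  have hsub : ∀ i ∈ Finset.Icc (1 : Fin (n + 1)) k,
      phi K n k (X (ι (j, i))) = subst K n k (ι (j, i)) := by
    intro i _
    rw [phi, MvPolynomial.aeval_X]
  rw [Finset.sum_congr rfl hsub]
  have hk : k ∈ Finset.Icc (1 : Fin (n + 1)) k := Finset.mem_Icc.mpr ⟨hk1, le_rfl⟩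
  rw [← Finset.insert_erase hk, Finset.sum_insert (Finset.notMem_erase _ _)]
  rw [subst_k]
  have : ∑ i ∈ (Finset.Icc (1 : Fin (n + 1)) k).erase k, subst K n k (ι (j, i))
      = ∑ i ∈ Ecol n k, X (ι (j, i)) := by
    apply Finset.sum_congr rfl
    intro i hi
    exact subst_ne K k (Finset.mem_erase.mp hi).1
  rw [this]
  exact neg_add_cancel _

theorem lead_lin (k : Fin (n + 1)) (hk1 : (1 : Fin (n + 1)) ≤ k) (j : Fin n) :
    (∑ i ∈ Finset.Icc (1 : Fin (n + 1)) k, (X (ι (j, i)) : MvPolynomial (Stmt7.Idx n) K)) ≠ 0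
    ∧ leadExp (Stmt7.ord n)
        (∑ i ∈ Finset.Icc (1 : Fin (n + 1)) k, (X (ι (j, i)) : MvPolynomial (Stmt7.Idx n) K))
      = Finsupp.single (ι (j, k)) 1 := by
  classical
  set f : MvPolynomial (Stmt7.Idx n) K :=
    ∑ i ∈ Finset.Icc (1 : Fin (n + 1)) k, X (ι (j, i)) with hfdef
  have hk : k ∈ Finset.Icc (1 : Fin (n + 1)) k := Finset.mem_Icc.mpr ⟨hk1, le_rfl⟩
  have hcoeff : MvPolynomial.coeff (Finsupp.single (ι (j, k)) 1) f = 1 := by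
    rw [hfdef, MvPolynomial.coeff_sum]
    rw [Finset.sum_eq_single k]
    · rw [MvPolynomial.coeff_X' (R := K), if_pos rfl]
    · intro i hi hne
      rw [MvPolynomial.coeff_X' (R := K), if_neg]
      intro h
      have h2 : ι ((j : Fin n), (i : Fin (n+1))) = ι (j, k) :=
        Finsupp.single_left_injective one_ne_zero h
      have h3 : ((j : Fin n), (i : Fin (n+1))) = (j, k) := ι_inj h2
      exact hne (congrArg Prod.snd h3)
    · intro hni
      exact absurd hk hni
  have hmem : Finsupp.single (ι (j, k)) 1 ∈ f.support := by
    rw [MvPolynomial.mem_support_iff, hcoeff]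
    exact one_ne_zero
  have hf0 : f ≠ 0 := fun h => by
    rw [h] at hmem
    simp at hmem
  refine ⟨hf0, ?_⟩
  apply leadExp_eq (Stmt7.ord n) hmem
  intro ξ hξ
  rw [hfdef] at hξ
  obtain ⟨i, hi, hξi⟩ := Finset.mem_biUnion.mp (MvPolynomial.support_sum hξ)
  rw [MvPolynomial.support_X, Finset.mem_singleton] at hξi
  subst hξi
  exact single_le_single (ι_le_ι (Finset.mem_Icc.mp hi).2)

end Stmt7Aux

/-- for the `n × (n+1)` matrix of indeterminates `Y` and a
nonempty `S ⊆ [n]`, WLOG consisting of consecutive columns `1, …, k`, the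
linear forms `f_j = ∑_{i ∈ S} Y_{ji}` (`1 ≤ j ≤ n`) together with all maximal
minors `det Y(ĵ)` (`0 ≤ j ≤ n`) form a Gröbner basis of the ideal they
generate, for the term order above. -/
theorem stmt7 {K : Type*} [Field K] (n : ℕ) (k : Fin (n + 1))
    (hk : 1 ≤ (k : ℕ)) :
    Stmt7.IsGroebnerBasis (Stmt7.ord n)
      (({f | ∃ j : Fin n, f = ∑ i ∈ Finset.Icc (1 : Fin (n + 1)) k,
            X (OrderDual.toDual (toLex (j, i)))} ∪
        {f | ∃ j : Fin (n + 1), f =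
            (Matrix.of fun a b : Fin n =>
              (X (OrderDual.toDual (toLex (a, j.succAbove b))) :
                MvPolynomial (Stmt7.Idx n) K)).det})
        : Set (MvPolynomial (Stmt7.Idx n) K)) := by
  classical
  obtain _ | n := n
  · exfalso
    have := k.isLt
    omega
  intro f hf hf0
  have hk1 : (1 : Fin (n + 2)) ≤ k := by
    rw [Fin.le_def]
    simpa using hk
  by_cases hcase : ∀ jr : Fin (n + 1),
      Stmt7.leadExp (Stmt7.ord (n + 1)) f (Stmt7Aux.ι (jr, k)) = 0
  · -- Case B : leading monomial is k-free; use the minor `det Y(k̂)`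
    have hKF : ∀ x, Stmt7Aux.colOf x = k → Stmt7.leadExp (Stmt7.ord (n + 1)) f x = 0 := by
      intro x hx
      have h1 := hcase (Stmt7Aux.rowOf x)
      rw [← hx] at h1
      exact h1
    obtain ⟨hφ0, hφlead⟩ := Stmt7Aux.phi_lead K k hf0 hKF
    have hmem : Stmt7Aux.phi K (n + 1) k f ∈ Ideal.span {(Stmt7Aux.Xmat K (n + 1) k).det} := by
      have h1 : Stmt7Aux.phi K (n + 1) k f ∈ Ideal.map (Stmt7Aux.phi K (n + 1) k)
          (Ideal.span _) := Ideal.mem_map_of_mem _ hf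
      rw [Ideal.map_span] at h1
      refine Ideal.span_le.mpr ?_ h1
      rintro x ⟨g, hg, rfl⟩
      rcases hg with ⟨j, rfl⟩ | ⟨j, rfl⟩
      · rw [Stmt7Aux.phi_lin K k hk1 j]
        exact Ideal.zero_mem _
      · exact Stmt7Aux.phi_minor K k j
    obtain ⟨b, hb⟩ := Ideal.mem_span_singleton'.mp hmem
    have hb0 : b ≠ 0 := by
      intro h
      rw [h, zero_mul] at hb
      exact hφ0 hb.symm
    have hD0 : (Stmt7Aux.Xmat K (n + 1) k).det ≠ 0 := by
      intro h
      rw [h, mul_zero] at hb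
      exact hφ0 hb.symm
    refine ⟨(Stmt7Aux.Xmat K (n + 1) k).det, Or.inr ⟨k, rfl⟩, hD0, ?_⟩
    have heq : Stmt7.leadExp (Stmt7.ord (n + 1)) f
        = Stmt7.leadExp (Stmt7.ord (n + 1)) b
          + Stmt7.leadExp (Stmt7.ord (n + 1)) ((Stmt7Aux.Xmat K (n + 1) k).det) := by
      rw [← hφlead, ← hb, Stmt7Aux.leadExp_mul (Stmt7.ord (n + 1)) hb0 hD0]
    calc Stmt7.leadExp (Stmt7.ord (n + 1)) ((Stmt7Aux.Xmat K (n + 1) k).det)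
        ≤ Stmt7.leadExp (Stmt7.ord (n + 1)) b
          + Stmt7.leadExp (Stmt7.ord (n + 1)) ((Stmt7Aux.Xmat K (n + 1) k).det) :=
          le_add_self
      _ = Stmt7.leadExp (Stmt7.ord (n + 1)) f := heq.symm
  · -- Case A : some `Y_{j,k}` divides the leading monomial; use the linear form
    push_neg at hcase
    obtain ⟨jr, hjr⟩ := hcase
    obtain ⟨hlin0, hlinlead⟩ := Stmt7Aux.lead_lin K k hk1 jr
    refine ⟨_, Or.inl ⟨jr, rfl⟩, hlin0, ?_⟩
    rw [hlinlead]
    rw [Finsupp.single_le_iff]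
    exact Nat.one_le_iff_ne_zero.mpr hjr

end Stmt7
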